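/- The number of distinct sets RtLM(σ) over all permutations σ of {1,...,m} equals the Catalan number C_m = (1/(m+1))·C(2m,m). -/

import Mathlib

namespace Paper

/-- Two elements are incomparable. -/
def Incomp {α : Type*} [PartialOrder α] (a b : α) : Prop := ¬ a ≤ b ∧ ¬ b ≤ a

/-- A semiorder: no induced `2+2` and no induced `3+1`. -/
def IsSemiorder (α : Type*) [PartialOrder α] : Prop :=
  (¬ ∃ x y z w : α, y < x ∧ w < z ∧ Incomp x z ∧ Incomp x w ∧ Incomp y z ∧ Incomp y w) ∧
  (¬ ∃ x y z w : α, z < y ∧ y < x ∧ Incomp x w ∧ Incomp y w ∧ Incomp z w)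

/-- There is a chain of `k` elements. -/
def HasChain (α : Type*) [Preorder α] (k : ℕ) : Prop := ∃ c : Fin k → α, StrictMono c

/-- The length of a longest chain (number of edges) is exactly `H`. -/
def HasLength (α : Type*) [Preorder α] (H : ℕ) : Prop :=
  HasChain α (H + 1) ∧ ¬ HasChain α (H + 2)

/-- There is a chain of `k` elements all strictly above `a`. -/
def HasChainAbove {α : Type*} [Preorder α] (a : α) (k : ℕ) : Prop :=
  ∃ c : Fin k → α, StrictMono c ∧ ∀ j, a < c j

/-- `a` is on the `i`-th level (`i ≥ 1`). -/
def OnLevel {α : Type*} [Preorder α] (a : α) (i : ℕ) : Prop :=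
  1 ≤ i ∧ HasChainAbove a (i - 1) ∧ ¬ HasChainAbove a i

/-- Number of isomorphism classes of partial orders on `Fin n` satisfying `pred`. -/
noncomputable def countPosets (n : ℕ) (pred : PartialOrder (Fin n) → Prop) : ℕ :=
  Nat.card (Quot (fun (P Q : {P : PartialOrder (Fin n) // pred P}) =>
    ∃ e : Fin n ≃ Fin n, ∀ a b : Fin n,
      (@LE.le _ P.1.toPreorder.toLE a b ↔ @LE.le _ Q.1.toPreorder.toLE (e a) (e b))))

/-- Semiorder of length exactly `H`. -/
def SemiLen (n H : ℕ) (P : PartialOrder (Fin n)) : Prop :=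
  @IsSemiorder (Fin n) P ∧ @HasLength (Fin n) P.toPreorder H

/-- Semiorder of length at most `h`. -/
def SemiLenLe (n h : ℕ) (P : PartialOrder (Fin n)) : Prop :=
  @IsSemiorder (Fin n) P ∧ ¬ @HasChain (Fin n) P.toPreorder (h + 2)

/-- `f_H^n`. -/
noncomputable def fEx (H n : ℕ) : ℕ := countPosets n (SemiLen n H)

/-- `f_{≤h}^n`. -/
noncomputable def fLe (h n : ℕ) : ℕ := countPosets n (SemiLenLe n h)

/-- Ordered (plane) trees. -/
inductive PTree where
  | node : List PTree → PTree

def PTree.size : PTree → ℕ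
  | .node cs => 1 + (cs.attach.map fun c => PTree.size c.1).sum
decreasing_by have := List.sizeOf_lt_of_mem c.2; simp only [PTree.node.sizeOf_spec] at *; omega

def PTree.height : PTree → ℕ
  | .node cs => (cs.attach.map fun c => PTree.height c.1 + 1).foldr max 0
decreasing_by have := List.sizeOf_lt_of_mem c.2; simp only [PTree.node.sizeOf_spec] at *; omega

def PTree.countDepth : PTree → ℕ → ℕ
  | .node _, 0 => 1
  | .node cs, d + 1 => (cs.attach.map fun c => PTree.countDepth c.1 d).sum
termination_by t _ => sizeOf t
decreasing_by have := List.sizeOf_lt_of_mem c.2; simp only [PTree.node.sizeOf_spec] at *; omega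

/-- Value of a path after the steps in `l` (`true` = up-step, `false` = down-step). -/
def pathVal (l : List Bool) : ℤ := (l.map fun b => if b then (1 : ℤ) else -1).sum

/-- `l` is a Dyck path. -/
def IsDyckPath (l : List Bool) : Prop :=
  pathVal l = 0 ∧ ∀ p, p <+: l → 0 ≤ pathVal p

/-- The height of the path `l` is exactly `H`. -/
def DyckHeightIs (l : List Bool) (H : ℕ) : Prop :=
  (∃ p, p <+: l ∧ pathVal p = H) ∧ ∀ p, p <+: l → pathVal p ≤ (H : ℤ)

/-- Number of peaks of a path. -/
def peaks (l : List Bool) : ℕ :=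
  ((List.range l.length).filter fun i => l.getD i false && !(l.getD (i + 1) true)).length


/-- `σ a` is a right-to-left minimum of `σ`. -/
def IsRtLMin {m : ℕ} (σ : Equiv.Perm (Fin m)) (a : Fin m) : Prop :=
  ∀ b, a < b → σ a < σ b

/-- The set of (position, value) pairs of right-to-left minima of `σ`. -/
def RtLM {m : ℕ} (σ : Equiv.Perm (Fin m)) : Set (Fin m × Fin m) :=
  {p | p.2 = σ p.1 ∧ IsRtLMin σ p.1}

/-- The number of right-to-left minima of `σ`. -/
noncomputable def numRtLMin {m : ℕ} (σ : Equiv.Perm (Fin m)) : ℕ :=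
  Nat.card {a : Fin m // IsRtLMin σ a}


open Finset

/-- Monotone functions on `Fin m` lying above the diagonal. -/
def GS (m : ℕ) := {g : Fin m → Fin m // Monotone g ∧ ∀ q, q ≤ g q}

instance (m : ℕ) : Finite (GS m) := by unfold GS; infer_instance

lemma GS_zero_card : Nat.card (GS 0) = 1 := by
  have : Subsingleton (GS 0) := ⟨fun a b => Subtype.ext (funext fun q => q.elim0)⟩
  have : Nonempty (GS 0) := ⟨⟨id, monotone_id, fun q => le_refl _⟩⟩
  exact Nat.card_eq_one_iff_unique.mpr ⟨‹_›, ‹_›⟩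

/-- Backward map of the first-return decomposition. -/
def bwdFun (m : ℕ) (t : Fin (m+1)) (g1 : Fin t.1 → Fin t.1)
    (g2 : Fin (m - t.1) → Fin (m - t.1)) : Fin (m+1) → Fin (m+1) := fun q =>
  if hq : q.1 < t.1 then
    ⟨(g1 ⟨q.1, hq⟩).1 + 1, by have := (g1 ⟨q.1, hq⟩).2; have := t.2; omega⟩
  else if hq2 : q.1 = t.1 then t
  else
    ⟨(g2 ⟨q.1 - t.1 - 1, by have := q.2; omega⟩).1 + t.1 + 1, by
      have := (g2 ⟨q.1 - t.1 - 1, by have := q.2; omega⟩).2; omega⟩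

lemma bwdFun_lt {m : ℕ} (t : Fin (m+1)) (g1 : Fin t.1 → Fin t.1)
    (g2 : Fin (m - t.1) → Fin (m - t.1)) (q : Fin (m+1)) (hq : q.1 < t.1) :
    (bwdFun m t g1 g2 q).1 = (g1 ⟨q.1, hq⟩).1 + 1 := by
  simp [bwdFun, hq]

lemma bwdFun_eq {m : ℕ} (t : Fin (m+1)) (g1 : Fin t.1 → Fin t.1)
    (g2 : Fin (m - t.1) → Fin (m - t.1)) (q : Fin (m+1)) (hq : q.1 = t.1) :
    bwdFun m t g1 g2 q = t := by
  simp [bwdFun, hq]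

lemma bwdFun_gt {m : ℕ} (t : Fin (m+1)) (g1 : Fin t.1 → Fin t.1)
    (g2 : Fin (m - t.1) → Fin (m - t.1)) (q : Fin (m+1)) (hq : t.1 < q.1) :
    (bwdFun m t g1 g2 q).1
      = (g2 ⟨q.1 - t.1 - 1, by have := q.2; omega⟩).1 + t.1 + 1 := by
  have h1 : ¬ q.1 < t.1 := by omega
  have h2 : ¬ q.1 = t.1 := by omega
  simp [bwdFun, h1, h2]

lemma bwdFun_mono {m : ℕ} (t : Fin (m+1)) (g1 : GS t.1) (g2 : GS (m - t.1)) :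
    Monotone (bwdFun m t g1.1 g2.1) := by
  intro q q' h
  rw [Fin.le_def] at h ⊢
  rcases Nat.lt_trichotomy q.1 t.1 with hq | hq | hq
  · rw [bwdFun_lt t g1.1 g2.1 q hq]
    rcases Nat.lt_trichotomy q'.1 t.1 with hq' | hq' | hq'
    · rw [bwdFun_lt t g1.1 g2.1 q' hq']
      have hab : (⟨q.1, hq⟩ : Fin t.1) ≤ ⟨q'.1, hq'⟩ := by rw [Fin.le_def]; exact h
      have := g1.2.1 hab
      rw [Fin.le_def] at this; omega
    · rw [bwdFun_eq t g1.1 g2.1 q' hq']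
      have := (g1.1 ⟨q.1, hq⟩).2; omega
    · rw [bwdFun_gt t g1.1 g2.1 q' hq']
      have := (g1.1 ⟨q.1, hq⟩).2; omega
  · rw [bwdFun_eq t g1.1 g2.1 q hq]
    rcases Nat.lt_trichotomy q'.1 t.1 with hq' | hq' | hq'
    · omega
    · rw [bwdFun_eq t g1.1 g2.1 q' hq']
    · rw [bwdFun_gt t g1.1 g2.1 q' hq']; omega
  · rw [bwdFun_gt t g1.1 g2.1 q hq]
    have hq' : t.1 < q'.1 := by omega
    rw [bwdFun_gt t g1.1 g2.1 q' hq']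
    have hab : (⟨q.1 - t.1 - 1, by have := q.2; omega⟩ : Fin (m - t.1))
        ≤ ⟨q'.1 - t.1 - 1, by have := q'.2; omega⟩ := by rw [Fin.le_def]; simp; omega
    have := g2.2.1 hab
    rw [Fin.le_def] at this; omega

lemma bwdFun_diag {m : ℕ} (t : Fin (m+1)) (g1 : GS t.1) (g2 : GS (m - t.1)) :
    ∀ q, q ≤ bwdFun m t g1.1 g2.1 q := by
  intro q
  rw [Fin.le_def]
  rcases Nat.lt_trichotomy q.1 t.1 with hq | hq | hq
  · rw [bwdFun_lt t g1.1 g2.1 q hq]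
    have := g1.2.2 ⟨q.1, hq⟩
    rw [Fin.le_def] at this; simp at this; omega
  · rw [bwdFun_eq t g1.1 g2.1 q hq]; omega
  · rw [bwdFun_gt t g1.1 g2.1 q hq]
    have := g2.2.2 ⟨q.1 - t.1 - 1, by have := q.2; omega⟩
    rw [Fin.le_def] at this; simp at this; omega

/-- The backward map of the first-return decomposition, as a map into `GS (m+1)`. -/
def bwd (m : ℕ) (x : (t : Fin (m+1)) × (GS t.1 × GS (m - t.1))) : GS (m+1) :=
  ⟨bwdFun m x.1 x.2.1.1 x.2.2.1, bwdFun_mono x.1 x.2.1 x.2.2, bwdFun_diag x.1 x.2.1 x.2.2⟩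

lemma GS_last_fixed {m : ℕ} (g : GS (m+1)) : g.1 (Fin.last m) = Fin.last m :=
  le_antisymm (Fin.le_last _) (g.2.2 _)

/-- The first diagonal point of `g`. -/
noncomputable def tmin {m : ℕ} (g : GS (m+1)) : Fin (m+1) :=
  (univ.filter fun q => g.1 q = q).min'
    ⟨Fin.last m, by simp [GS_last_fixed g]⟩

lemma tmin_fixed {m : ℕ} (g : GS (m+1)) : g.1 (tmin g) = tmin g := by
  have := Finset.min'_mem (univ.filter fun q => g.1 q = q)
    ⟨Fin.last m, by simp [GS_last_fixed g]⟩
  simpa [tmin] using this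

lemma tmin_min {m : ℕ} (g : GS (m+1)) (q : Fin (m+1)) (h : q < tmin g) : g.1 q ≠ q := by
  intro hfix
  have : tmin g ≤ q := Finset.min'_le _ _ (by simp [hfix])
  exact absurd h (not_lt.mpr this)

lemma tmin_bwd {m : ℕ} (x : (t : Fin (m+1)) × (GS t.1 × GS (m - t.1))) :
    tmin (bwd m x) = x.1 := by
  obtain ⟨t, g1, g2⟩ := x
  have hfix : (bwd m ⟨t, g1, g2⟩).1 t = t := bwdFun_eq t g1.1 g2.1 t rfl
  apply le_antisymm
  · exact Finset.min'_le _ _ (by simp [hfix])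
  · by_contra hlt
    push_neg at hlt
    have h2 : (bwd m ⟨t, g1, g2⟩).1 (tmin _) = tmin _ := tmin_fixed _
    have hv : (tmin (bwd m ⟨t, g1, g2⟩)).1 < t.1 := hlt
    have := bwdFun_lt t g1.1 g2.1 _ hv
    rw [show bwdFun m t g1.1 g2.1 (tmin (bwd m ⟨t, g1, g2⟩)) = tmin (bwd m ⟨t, g1, g2⟩) from h2] at this
    have hb := (g1.1 ⟨(tmin (bwd m ⟨t, g1, g2⟩)).1, hv⟩).2
    have hd := g1.2.2 ⟨(tmin (bwd m ⟨t, g1, g2⟩)).1, hv⟩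
    rw [Fin.le_def] at hd
    simp at hd
    omega

lemma bwd_inj (m : ℕ) : Function.Injective (bwd m) := by
  intro x y h
  obtain ⟨t, g1, g2⟩ := x; obtain ⟨s, h1, h2⟩ := y
  have ht : t = s := by
    have := tmin_bwd ⟨t, g1, g2⟩
    rw [h, tmin_bwd ⟨s, h1, h2⟩] at this
    exact this.symm
  subst ht
  have hf : bwdFun m t g1.1 g2.1 = bwdFun m t h1.1 h2.1 :=
    congrArg (fun z => z.1) h
  have e1 : g1 = h1 := by
    apply Subtype.ext; funext q
    have hQ : q.1 < m + 1 := by have := q.2; have := t.2; omega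
    have hv : (⟨q.1, hQ⟩ : Fin (m+1)).1 < t.1 := q.2
    have l1 := bwdFun_lt t g1.1 g2.1 ⟨q.1, hQ⟩ hv
    have l2 := bwdFun_lt t h1.1 h2.1 ⟨q.1, hQ⟩ hv
    rw [hf] at l1
    apply Fin.ext
    have hqq : (⟨(⟨q.1, hQ⟩ : Fin (m+1)).1, hv⟩ : Fin t.1) = q := Fin.ext rfl
    rw [hqq] at l1 l2
    omega
  have e2 : g2 = h2 := by
    apply Subtype.ext; funext q
    have hQ : t.1 + 1 + q.1 < m + 1 := by have := q.2; omega
    have hv : t.1 < (⟨t.1 + 1 + q.1, hQ⟩ : Fin (m+1)).1 := by simp; omega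
    have l1 := bwdFun_gt t g1.1 g2.1 ⟨t.1 + 1 + q.1, hQ⟩ hv
    have l2 := bwdFun_gt t h1.1 h2.1 ⟨t.1 + 1 + q.1, hQ⟩ hv
    rw [hf] at l1
    apply Fin.ext
    have hqq : (⟨(⟨t.1 + 1 + q.1, hQ⟩ : Fin (m+1)).1 - t.1 - 1, by have := q.2; omega⟩ : Fin (m - t.1)) = q := by
      apply Fin.ext; simp; omega
    rw [hqq] at l1 l2
    omega
  rw [e1, e2]


section Surj

variable {m : ℕ}

/-- Embedding of `Fin t.1` into `Fin (m+1)`. -/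
def inj1 (t : Fin (m+1)) (q : Fin t.1) : Fin (m+1) := ⟨q.1, Nat.lt_trans q.2 t.2⟩

/-- Embedding of `Fin (m - t.1)` into `Fin (m+1)`. -/
def inj2 (t : Fin (m+1)) (q : Fin (m - t.1)) : Fin (m+1) :=
  ⟨t.1 + 1 + q.1, by have := q.2; omega⟩

variable (g : GS (m+1))

lemma hlow (q : Fin (m+1)) (hq : q.1 < (tmin g).1) :
    q.1 < (g.1 q).1 ∧ (g.1 q).1 ≤ (tmin g).1 := by
  constructor
  · have h1 := g.2.2 q
    rw [Fin.le_def] at h1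
    have h2 : g.1 q ≠ q := tmin_min g q (by rw [Fin.lt_def]; exact hq)
    have h3 : (g.1 q).1 ≠ q.1 := fun hc => h2 (Fin.ext hc)
    omega
  · have h4 : g.1 q ≤ g.1 (tmin g) := g.2.1 (by rw [Fin.le_def]; omega)
    rw [tmin_fixed g] at h4
    exact h4

/-- First component of the decomposition. -/
noncomputable def fwd1 : Fin (tmin g).1 → Fin (tmin g).1 := fun q =>
  ⟨(g.1 (inj1 (tmin g) q)).1 - 1, by
    have := (hlow g (inj1 (tmin g) q) q.2).2
    have := q.2
    omega⟩

/-- Second component of the decomposition. -/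
noncomputable def fwd2 : Fin (m - (tmin g).1) → Fin (m - (tmin g).1) := fun q =>
  ⟨(g.1 (inj2 (tmin g) q)).1 - ((tmin g).1 + 1), by
    have h1 := g.2.2 (inj2 (tmin g) q)
    rw [Fin.le_def] at h1
    have h2 := (g.1 (inj2 (tmin g) q)).2
    have h3 := q.2
    simp only [inj2] at h1
    omega⟩

lemma fwd1_mem : Monotone (fwd1 g) ∧ ∀ q, q ≤ fwd1 g q := by
  constructor
  · intro a b hab
    rw [Fin.le_def] at hab ⊢
    simp only [fwd1]
    have hm : g.1 (inj1 (tmin g) a) ≤ g.1 (inj1 (tmin g) b) :=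
      g.2.1 (by rw [Fin.le_def]; exact hab)
    rw [Fin.le_def] at hm
    omega
  · intro q
    rw [Fin.le_def]
    simp only [fwd1]
    have := (hlow g (inj1 (tmin g) q) q.2).1
    have hv : (inj1 (tmin g) q).1 = q.1 := rfl
    omega

lemma fwd2_mem : Monotone (fwd2 g) ∧ ∀ q, q ≤ fwd2 g q := by
  constructor
  · intro a b hab
    rw [Fin.le_def] at hab ⊢
    simp only [fwd2]
    have hm : g.1 (inj2 (tmin g) a) ≤ g.1 (inj2 (tmin g) b) :=
      g.2.1 (by rw [Fin.le_def]; simp only [inj2]; omega)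
    rw [Fin.le_def] at hm
    omega
  · intro q
    rw [Fin.le_def]
    simp only [fwd2]
    have h1 := g.2.2 (inj2 (tmin g) q)
    rw [Fin.le_def] at h1
    have hv : (inj2 (tmin g) q).1 = (tmin g).1 + 1 + q.1 := rfl
    omega

lemma bwd_surj (m : ℕ) : Function.Surjective (bwd m) := by
  intro g
  refine ⟨⟨tmin g, ⟨fwd1 g, fwd1_mem g⟩, ⟨fwd2 g, fwd2_mem g⟩⟩, ?_⟩
  apply Subtype.ext
  funext q
  apply Fin.ext
  rcases Nat.lt_trichotomy q.1 (tmin g).1 with hq | hq | hq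
  · rw [show (bwd m ⟨tmin g, ⟨fwd1 g, fwd1_mem g⟩, ⟨fwd2 g, fwd2_mem g⟩⟩).1 q
        = bwdFun m (tmin g) (fwd1 g) (fwd2 g) q from rfl]
    rw [bwdFun_lt (tmin g) (fwd1 g) (fwd2 g) q hq]
    simp only [fwd1]
    have h1 := (hlow g (inj1 (tmin g) ⟨q.1, hq⟩) hq).1
    have hqq : inj1 (tmin g) ⟨q.1, hq⟩ = q := Fin.ext rfl
    rw [hqq] at h1 ⊢
    omega
  · rw [show (bwd m ⟨tmin g, ⟨fwd1 g, fwd1_mem g⟩, ⟨fwd2 g, fwd2_mem g⟩⟩).1 q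
        = bwdFun m (tmin g) (fwd1 g) (fwd2 g) q from rfl]
    rw [bwdFun_eq (tmin g) (fwd1 g) (fwd2 g) q hq]
    have hqq : q = tmin g := Fin.ext hq
    rw [hqq, tmin_fixed g]
  · rw [show (bwd m ⟨tmin g, ⟨fwd1 g, fwd1_mem g⟩, ⟨fwd2 g, fwd2_mem g⟩⟩).1 q
        = bwdFun m (tmin g) (fwd1 g) (fwd2 g) q from rfl]
    rw [bwdFun_gt (tmin g) (fwd1 g) (fwd2 g) q hq]
    simp only [fwd2]
    have hqq : inj2 (tmin g) ⟨q.1 - (tmin g).1 - 1, by have := q.2; omega⟩ = q :=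
      Fin.ext (by simp only [inj2]; omega)
    have h1 := g.2.2 q
    rw [Fin.le_def] at h1
    rw [hqq]
    omega

end Surj

theorem card_GS : ∀ m, Nat.card (GS m) = catalan m := by
  intro m
  induction m using Nat.strong_induction_on with
  | _ m ih =>
    match m, ih with
    | 0, _ => rw [GS_zero_card, catalan_zero]
    | (m+1), ih =>
      classical
      letI : ∀ n, Fintype (GS n) := fun n => Fintype.ofFinite _
      have hbij := Nat.card_eq_of_bijective (bwd m) ⟨bwd_inj m, bwd_surj m⟩
      rw [← hbij, Nat.card_eq_fintype_card, Fintype.card_sigma, catalan_succ]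
      apply Finset.sum_congr rfl
      intro i _
      rw [Fintype.card_prod, ← Nat.card_eq_fintype_card (α := GS i.1),
        ← Nat.card_eq_fintype_card (α := GS (m - i.1)),
        ih i.1 (by omega), ih (m - i.1) (by omega)]

section Gmap

variable {m : ℕ} (σ : Equiv.Perm (Fin m))

/-- The last position whose value is at most `q`. -/
def Gmap (q : Fin m) : Fin m :=
  (univ.filter fun b => σ b ≤ q).max' ⟨σ.symm q, by simp⟩

lemma Gmap_mem (q : Fin m) : σ (Gmap σ q) ≤ q := by
  have := Finset.max'_mem (univ.filter fun b => σ b ≤ q) ⟨σ.symm q, by simp⟩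
  simpa [Gmap] using this

lemma le_Gmap {q b : Fin m} (h : σ b ≤ q) : b ≤ Gmap σ q :=
  Finset.le_max' _ _ (by simp [h])

lemma Gmap_mono : Monotone (Gmap σ) := by
  intro q q' h
  exact le_Gmap σ (le_trans (Gmap_mem σ q) h)

lemma self_le_Gmap (q : Fin m) : q ≤ Gmap σ q := by
  by_contra h
  push_neg at h
  have hsub : (Finset.Iic q).image σ.symm ⊆ Finset.Iio q := by
    intro b hb
    simp only [Finset.mem_image, Finset.mem_Iic] at hb
    obtain ⟨v, hv, rfl⟩ := hb
    have : σ (σ.symm v) ≤ q := by simpa using hv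
    have h2 := le_Gmap σ this
    simp only [Finset.mem_Iio]
    exact lt_of_le_of_lt h2 h
  have hc := Finset.card_le_card hsub
  rw [Finset.card_image_of_injective _ σ.symm.injective, Fin.card_Iic, Fin.card_Iio] at hc
  omega

lemma isMin_Gmap (q : Fin m) : IsRtLMin σ (Gmap σ q) := by
  intro b hb
  by_contra hc
  push_neg at hc
  have h1 : σ b ≤ q := le_trans hc (Gmap_mem σ q)
  exact absurd hb (not_lt.mpr (le_Gmap σ h1))

lemma min_iff (a : Fin m) : IsRtLMin σ a ↔ Gmap σ (σ a) = a := by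
  constructor
  · intro h
    refine le_antisymm ?_ (le_Gmap σ (le_refl _))
    by_contra hc
    push_neg at hc
    exact absurd (h _ hc) (not_lt.mpr (Gmap_mem σ (σ a)))
  · intro h
    rw [← h]
    exact isMin_Gmap σ (σ a)

lemma RtLM_char :
    RtLM σ = {p | Gmap σ p.2 = p.1 ∧ ∀ v' < p.2, Gmap σ v' ≠ p.1} := by
  ext ⟨a, v⟩
  simp only [RtLM, Set.mem_setOf_eq]
  constructor
  · rintro ⟨rfl, hmin⟩
    refine ⟨(min_iff σ a).mp hmin, ?_⟩
    intro v' hv' hc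
    have := Gmap_mem σ v'
    rw [hc] at this
    exact absurd (lt_of_le_of_lt this hv') (lt_irrefl _)
  · rintro ⟨h1, h2⟩
    have hmin : IsRtLMin σ a := by rw [← h1]; exact isMin_Gmap σ v
    have hle : σ a ≤ v := by
      have := Gmap_mem σ v
      rwa [h1] at this
    rcases lt_or_eq_of_le hle with hlt | heq
    · exact absurd ((min_iff σ a).mp hmin) (h2 (σ a) hlt)
    · exact ⟨heq.symm, hmin⟩

lemma Gmap_eq_of_RtLM_eq {τ : Equiv.Perm (Fin m)} (h : RtLM σ = RtLM τ) :
    Gmap σ = Gmap τ := by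
  have key : ∀ (σ τ : Equiv.Perm (Fin m)), RtLM σ = RtLM τ → ∀ q, Gmap σ q ≤ Gmap τ q := by
    intro σ τ h q
    have hmem : (Gmap σ q, σ (Gmap σ q)) ∈ RtLM σ := ⟨rfl, isMin_Gmap σ q⟩
    rw [h] at hmem
    obtain ⟨hval, -⟩ := hmem
    exact le_Gmap τ (by rw [← hval]; exact Gmap_mem σ q)
  funext q
  exact le_antisymm (key σ τ h q) (key τ σ h.symm q)

lemma RtLM_eq_of_Gmap_eq {τ : Equiv.Perm (Fin m)} (h : Gmap σ = Gmap τ) :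
    RtLM σ = RtLM τ := by
  rw [RtLM_char, RtLM_char, h]

end Gmap

section Rank

variable {m n : ℕ}

lemma rank_card {s : Finset (Fin m)} (e : Fin n ≃o s) (i : Fin n) :
    (s.filter fun y => y ≤ (e i : Fin m)).card = i.1 + 1 := by
  have himg : s.filter (fun y => y ≤ (e i : Fin m))
      = (Finset.Iic i).image (fun j => (e j : Fin m)) := by
    ext y
    simp only [Finset.mem_filter, Finset.mem_image, Finset.mem_Iic]
    constructor
    · rintro ⟨hy, hle⟩
      refine ⟨e.symm ⟨y, hy⟩, ?_, ?_⟩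
      · rw [← e.le_iff_le]
        rw [e.apply_symm_apply]; exact Subtype.coe_le_coe.mp hle
      · simp [e.apply_symm_apply]
    · rintro ⟨j, hj, rfl⟩
      exact ⟨(e j).2, by rw [Subtype.coe_le_coe, e.le_iff_le]; exact hj⟩
  rw [himg, Finset.card_image_of_injective _
      (fun a b hab => e.injective (Subtype.ext hab)), Fin.card_Iic]

lemma le_of_rank_le {t : Finset (Fin m)} (e : Fin n ≃o t) (i : Fin n) (B : Fin m)
    (h : i.1 + 1 ≤ (t.filter fun y => y ≤ B).card) : (e i : Fin m) ≤ B := by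
  by_contra hB
  push_neg at hB
  have hsub : t.filter (fun y => y ≤ B) ⊆ (Finset.Iio i).image (fun j => (e j : Fin m)) := by
    intro y hy
    simp only [Finset.mem_filter] at hy
    obtain ⟨hy1, hy2⟩ := hy
    simp only [Finset.mem_image, Finset.mem_Iio]
    refine ⟨e.symm ⟨y, hy1⟩, ?_, by simp [e.apply_symm_apply]⟩
    rw [← e.lt_iff_lt]
    have : (e (e.symm ⟨y, hy1⟩) : Fin m) = y := by simp [e.apply_symm_apply]
    rw [show e (e.symm ⟨y, hy1⟩) = ⟨y, hy1⟩ from e.apply_symm_apply _, ← Subtype.coe_lt_coe]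
    exact lt_of_le_of_lt hy2 hB
  have hc := Finset.card_le_card hsub
  have := Finset.card_image_le (s := Finset.Iio i) (f := fun j => (e j : Fin m))
  rw [Fin.card_Iio] at this
  omega

lemma compl_filter_card (s : Finset (Fin m)) (B : Fin m) :
    ((sᶜ).filter fun y => y ≤ B).card + (s.filter fun y => y ≤ B).card = B.1 + 1 := by
  classical
  have h1 : (sᶜ).filter (fun y => y ≤ B) = (Finset.Iic B).filter (fun y => y ∉ s) := by
    ext y; simp [Finset.mem_filter, and_comm]
  have h2 : s.filter (fun y => y ≤ B) = (Finset.Iic B).filter (fun y => y ∈ s) := by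
    ext y; simp [Finset.mem_filter, and_comm]
  rw [h1, h2, Nat.add_comm, Finset.card_filter_add_card_filter_not, Fin.card_Iic]

end Rank

section Construct

variable {m : ℕ}

lemma exists_perm (g : Fin m → Fin m) (hmono : Monotone g) (hdiag : ∀ q, q ≤ g q) :
    ∃ σ : Equiv.Perm (Fin m), Gmap σ = g := by
  classical
  set F : Finset (Fin m) := univ.filter (fun q => ∀ q' < q, g q' ≠ g q) with hF
  have hfm_ex : ∀ q : Fin m, (univ.filter fun q' => g q' = g q).Nonempty :=
    fun q => ⟨q, by simp⟩
  set fm : Fin m → Fin m := fun q => (univ.filter fun q' => g q' = g q).min' (hfm_ex q)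
    with hfm
  have g_fm : ∀ q, g (fm q) = g q := by
    intro q
    have := Finset.min'_mem _ (hfm_ex q)
    simpa using this
  have fm_le : ∀ q q', g q' = g q → fm q ≤ q' := fun q q' h =>
    Finset.min'_le _ _ (by simp [h])
  have fm_mem : ∀ q, fm q ∈ F := by
    intro q
    rw [hF]
    simp only [Finset.mem_filter, Finset.mem_univ, true_and]
    intro q' hq' hc
    rw [g_fm q] at hc
    exact absurd (fm_le q q' hc) (not_le.mpr hq')
  have hinjF : Set.InjOn g ↑F := by
    intro x hx y hy hxy
    rcases lt_trichotomy x y with h | h | h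
    · exfalso
      have := (Finset.mem_filter.mp (Finset.mem_coe.mp hy)).2
      exact this x h hxy
    · exact h
    · exfalso
      have := (Finset.mem_filter.mp (Finset.mem_coe.mp hx)).2
      exact this y h hxy.symm
  have himg : F.image g = univ.image g := by
    apply Finset.Subset.antisymm
    · exact Finset.image_subset_image (Finset.subset_univ _)
    · intro r hr
      obtain ⟨x, -, rfl⟩ := Finset.mem_image.mp hr
      exact Finset.mem_image.mpr ⟨fm x, fm_mem x, g_fm x⟩
  have hcardF : F.card = (univ.image g).card := by
    rw [← himg, Finset.card_image_of_injOn hinjF]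
  have hcc : ((univ.image g)ᶜ).card = (Fᶜ).card := by
    rw [Finset.card_compl, Finset.card_compl, hcardF]
  set n := (Fᶜ).card with hn
  set eS := (Fᶜ).orderIsoOfFin rfl with heS
  set eT := ((univ.image g)ᶜ).orderIsoOfFin hcc with heT
  set pos : Fin m → Fin m := fun q =>
    if h : q ∈ F then g q else (eT (eS.symm ⟨q, Finset.mem_compl.mpr h⟩) : Fin m) with hpos
  have pos_F : ∀ q, q ∈ F → pos q = g q := by
    intro q h; simp [hpos, h]
  have pos_nF : ∀ q (h : q ∉ F),
      pos q = (eT (eS.symm ⟨q, Finset.mem_compl.mpr h⟩) : Fin m) := by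
    intro q h; simp [hpos, h]
  have hRfilter : ∀ q, ((univ.image g).filter fun y => y ≤ g q)
      = (F.filter fun y => y ≤ q).image g := by
    intro q
    ext r
    simp only [Finset.mem_filter, Finset.mem_image, Finset.mem_univ, true_and]
    constructor
    · rintro ⟨⟨x, rfl⟩, hle⟩
      refine ⟨fm x, ⟨fm_mem x, ?_⟩, g_fm x⟩
      by_contra hqx
      push_neg at hqx
      have h1 : g q ≤ g (fm x) := hmono (le_of_lt hqx)
      rw [g_fm x] at h1
      have h2 : g x = g q := le_antisymm hle h1
      exact absurd (fm_le x q h2.symm) (not_le.mpr hqx)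
    · rintro ⟨x, ⟨hxF, hxq⟩, rfl⟩
      exact ⟨⟨x, rfl⟩, hmono hxq⟩
  have hc_eq : ∀ q, ((univ.image g).filter fun y => y ≤ g q).card
      = (F.filter fun y => y ≤ q).card := by
    intro q
    rw [hRfilter q]
    have hsub : ↑(F.filter fun y => y ≤ q) ⊆ (↑F : Set (Fin m)) := by
      intro z hz
      simp only [Finset.coe_filter, Set.mem_setOf_eq, Finset.mem_coe] at hz ⊢
      exact hz.1
    exact Finset.card_image_of_injOn (hinjF.mono hsub)
  have pos_le : ∀ q, pos q ≤ g q := by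
    intro q
    by_cases h : q ∈ F
    · rw [pos_F q h]
    · rw [pos_nF q h]
      apply le_of_rank_le eT _ (g q)
      have h1 := rank_card eS (eS.symm ⟨q, Finset.mem_compl.mpr h⟩)
      have hei : (eS (eS.symm ⟨q, Finset.mem_compl.mpr h⟩) : Fin m) = q := by
        rw [eS.apply_symm_apply]
      rw [hei] at h1
      have h2 := compl_filter_card F q
      have h3 := compl_filter_card (univ.image g) (g q)
      have h4 := hc_eq q
      have h5 : q.1 ≤ (g q).1 := hdiag q
      omega
  have pos_inj : Function.Injective pos := by
    intro x y hxy
    by_cases hx : x ∈ F <;> by_cases hy : y ∈ F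
    · rw [pos_F x hx, pos_F y hy] at hxy
      exact hinjF (Finset.mem_coe.mpr hx) (Finset.mem_coe.mpr hy) hxy
    · exfalso
      rw [pos_F x hx, pos_nF y hy] at hxy
      have hmem := (eT (eS.symm ⟨y, Finset.mem_compl.mpr hy⟩)).2
      rw [← hxy] at hmem
      exact Finset.mem_compl.mp hmem (Finset.mem_image.mpr ⟨x, Finset.mem_univ x, rfl⟩)
    · exfalso
      rw [pos_nF x hx, pos_F y hy] at hxy
      have hmem := (eT (eS.symm ⟨x, Finset.mem_compl.mpr hx⟩)).2
      rw [hxy] at hmem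
      exact Finset.mem_compl.mp hmem (Finset.mem_image.mpr ⟨y, Finset.mem_univ y, rfl⟩)
    · rw [pos_nF x hx, pos_nF y hy] at hxy
      have h1 : eS.symm ⟨x, Finset.mem_compl.mpr hx⟩ = eS.symm ⟨y, Finset.mem_compl.mpr hy⟩ :=
        eT.injective (Subtype.ext hxy)
      have h2 := congrArg (fun z => ((eS z : {a // a ∈ Fᶜ}) : Fin m)) h1
      simpa [eS.apply_symm_apply] using h2
  have pos_bij : Function.Bijective pos := Finite.injective_iff_bijective.mp pos_inj
  set σ0 := Equiv.ofBijective pos pos_bij with hσ0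
  refine ⟨σ0.symm, ?_⟩
  funext q
  apply le_antisymm
  · have hb : σ0.symm.symm (σ0.symm (Gmap σ0.symm q)) = Gmap σ0.symm q :=
      σ0.symm.symm_apply_apply _
    have hb2 : σ0.symm (Gmap σ0.symm q) ≤ q := Gmap_mem σ0.symm q
    have hb3 : pos (σ0.symm (Gmap σ0.symm q)) = Gmap σ0.symm q := hb
    calc Gmap σ0.symm q = pos (σ0.symm (Gmap σ0.symm q)) := hb3.symm
      _ ≤ g (σ0.symm (Gmap σ0.symm q)) := pos_le _
      _ ≤ g q := hmono hb2
  · apply le_Gmap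
    have h1 : pos (fm q) = g q := by rw [pos_F _ (fm_mem q), g_fm]
    have h2 : σ0.symm (pos (fm q)) = fm q := σ0.symm_apply_apply (fm q)
    rw [h1] at h2
    rw [h2]
    exact fm_le q q rfl

end Construct

theorem cardA (m : ℕ) :
    Nat.card {S : Set (Fin m × Fin m) // ∃ σ : Equiv.Perm (Fin m), RtLM σ = S}
      = Nat.card (GS m) := by
  apply Nat.card_eq_of_bijective
    (fun S => (⟨Gmap (Classical.choose S.2), Gmap_mono _, self_le_Gmap _⟩ : GS m))
  constructor
  · intro S1 S2 h
    have h1 := Classical.choose_spec S1.2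
    have h2 := Classical.choose_spec S2.2
    have h3 : Gmap (Classical.choose S1.2) = Gmap (Classical.choose S2.2) :=
      congrArg Subtype.val h
    apply Subtype.ext
    rw [← h1, ← h2]
    exact RtLM_eq_of_Gmap_eq _ h3
  · rintro ⟨g, hg1, hg2⟩
    obtain ⟨σ, hσ⟩ := exists_perm g hg1 hg2
    refine ⟨⟨RtLM σ, σ, rfl⟩, ?_⟩
    apply Subtype.ext
    simp only
    have hspec := Classical.choose_spec (⟨σ, rfl⟩ : ∃ τ : Equiv.Perm (Fin m), RtLM τ = RtLM σ)
    rw [Gmap_eq_of_RtLM_eq _ hspec, hσ]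

theorem statement16 (m : ℕ) :
    Nat.card {S : Set (Fin m × Fin m) // ∃ σ : Equiv.Perm (Fin m), RtLM σ = S}
      = (2 * m).choose m / (m + 1) := by
  rw [cardA m, card_GS m, catalan_eq_centralBinom_div]
  rfl

end Paper
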